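/- The mean Avg is not self-accumulated: there exists a bounded Lebesgue measurable set H ⊆ ℝ with λ(H) > 0 such that, writing A = {x ∈ ℝ : for every δ > 0, λ(H ∩ S(x, δ)) > 0} for the set of accumulation points of H by Avg, the set A is bounded, Lebesgue measurable, λ(A) > 0, and Avg(A) ≠ Avg(H). -/

import Mathlib

open MeasureTheory

/-- The mean `Avg` by Lebesgue measure. -/
noncomputable def avg (H : Set ℝ) : ℝ := (∫ x in H, x) / (volume H).toReal

noncomputable def qSeq : ℕ → ℝ := fun n => ((Denumerable.ofNat ℚ n : ℚ) : ℝ)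

noncomputable def epsSeq : ℕ → ℝ := fun n => 1 / (100 * 2 ^ (n + 1))

def Tset : Set ℝ := ⋃ n, Metric.ball (qSeq n) (epsSeq n) ∩ Set.Ioo 0 1

def Hset : Set ℝ := Set.Ioo 0 (1/4) ∪ Tset

lemma epsSeq_pos (n : ℕ) : 0 < epsSeq n := by
  unfold epsSeq; positivity

lemma Tset_open : IsOpen Tset :=
  isOpen_iUnion fun n => Metric.isOpen_ball.inter isOpen_Ioo

lemma Hset_open : IsOpen Hset := isOpen_Ioo.union Tset_open

lemma Tset_sub : Tset ⊆ Set.Ioo 0 1 :=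
  Set.iUnion_subset fun n => Set.inter_subset_right

lemma Hset_sub : Hset ⊆ Set.Ioo 0 1 := by
  apply Set.union_subset _ Tset_sub
  intro x hx
  exact ⟨hx.1, by linarith [hx.2]⟩

lemma accum_eq :
    {x : ℝ | ∀ δ > 0, 0 < volume (Hset ∩ Metric.ball x δ)} = Set.Icc 0 1 := by
  ext x
  simp only [Set.mem_setOf_eq, Set.mem_Icc]
  constructor
  · intro hx
    constructor
    · by_contra h0
      push_neg at h0
      have h := hx (-x) (by linarith)
      have he : Hset ∩ Metric.ball x (-x) = ∅ := by
        rw [Set.eq_empty_iff_forall_notMem]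
        rintro y ⟨hyH, hyB⟩
        have h1 := (Hset_sub hyH).1
        rw [Real.ball_eq_Ioo] at hyB
        have := hyB.2
        linarith
      rw [he] at h
      simp at h
    · by_contra h1
      push_neg at h1
      have h := hx (x - 1) (by linarith)
      have he : Hset ∩ Metric.ball x (x - 1) = ∅ := by
        rw [Set.eq_empty_iff_forall_notMem]
        rintro y ⟨hyH, hyB⟩
        have h2 := (Hset_sub hyH).2
        rw [Real.ball_eq_Ioo] at hyB
        have := hyB.1
        linarith
      rw [he] at h
      simp at h
  · rintro ⟨h0, h1⟩ δ hδ
    set a : ℝ := max 0 (x - δ) with ha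
    set b : ℝ := min 1 (x + δ) with hb
    have hab : a < b := by
      rw [ha, hb]
      simp only [max_lt_iff, lt_min_iff]
      constructor <;> constructor <;> linarith
    obtain ⟨r, hr1, hr2⟩ := exists_rat_btwn hab
    set n : ℕ := @Encodable.encode ℚ Denumerable.toEncodable r with hn
    have hqn : qSeq n = (r : ℝ) := by
      unfold qSeq
      rw [hn, Denumerable.ofNat_encode]
    have hUsub : Metric.ball (qSeq n) (epsSeq n) ∩ Set.Ioo a b ⊆ Hset ∩ Metric.ball x δ := by
      rintro y ⟨hy1, hy2⟩
      have hy01 : y ∈ Set.Ioo (0:ℝ) 1 := by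
        constructor
        · have : a < y := hy2.1
          have : (0:ℝ) ≤ a := le_max_left _ _
          linarith [hy2.1]
        · have : b ≤ 1 := min_le_left _ _
          linarith [hy2.2]
      refine ⟨Or.inr ?_, ?_⟩
      · exact Set.mem_iUnion.mpr ⟨n, ⟨hy1, hy01⟩⟩
      · rw [Real.ball_eq_Ioo]
        constructor
        · have : x - δ ≤ a := le_max_right _ _
          linarith [hy2.1]
        · have : b ≤ x + δ := min_le_right _ _
          linarith [hy2.2]
    have hUopen : IsOpen (Metric.ball (qSeq n) (epsSeq n) ∩ Set.Ioo a b) :=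
      Metric.isOpen_ball.inter isOpen_Ioo
    have hUne : (Metric.ball (qSeq n) (epsSeq n) ∩ Set.Ioo a b).Nonempty := by
      refine ⟨qSeq n, Metric.mem_ball_self (epsSeq_pos n), ?_⟩
      rw [hqn]
      exact ⟨hr1, hr2⟩
    calc (0:ENNReal) < volume (Metric.ball (qSeq n) (epsSeq n) ∩ Set.Ioo a b) :=
          hUopen.measure_pos volume hUne
      _ ≤ volume (Hset ∩ Metric.ball x δ) := measure_mono hUsub

lemma Tset_vol : volume Tset ≤ ENNReal.ofReal (1 / 50) := by
  have h1 : volume Tset ≤ ∑' n, volume (Metric.ball (qSeq n) (epsSeq n)) := by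
    refine le_trans (measure_mono (Set.iUnion_mono fun n => Set.inter_subset_left)) ?_
    exact measure_iUnion_le _
  have h2 : ∀ n, volume (Metric.ball (qSeq n) (epsSeq n))
      = ENNReal.ofReal ((1 / 100) * (1 / 2) ^ n) := by
    intro n
    rw [Real.volume_ball]
    congr 1
    unfold epsSeq
    rw [pow_succ]
    field_simp
    ring_nf
    rw [← mul_pow]; norm_num
  have hsum : Summable (fun n : ℕ => (1 / 100 : ℝ) * (1 / 2) ^ n) :=
    (summable_geometric_of_lt_one (by norm_num) (by norm_num)).mul_left _
  have h3 : ∑' n, volume (Metric.ball (qSeq n) (epsSeq n)) = ENNReal.ofReal (1 / 50) := by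
    simp_rw [h2]
    rw [← ENNReal.ofReal_tsum_of_nonneg (fun n => by positivity) hsum]
    congr 1
    rw [tsum_mul_left, tsum_geometric_two]
    norm_num
  rw [← h3]; exact h1

theorem avg_not_selfAccumulated :
    ∃ H : Set ℝ, Bornology.IsBounded H ∧ MeasurableSet H ∧ 0 < volume H ∧
      Bornology.IsBounded {x : ℝ | ∀ δ > 0, 0 < volume (H ∩ Metric.ball x δ)} ∧
      MeasurableSet {x : ℝ | ∀ δ > 0, 0 < volume (H ∩ Metric.ball x δ)} ∧
      0 < volume {x : ℝ | ∀ δ > 0, 0 < volume (H ∩ Metric.ball x δ)} ∧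
      avg {x : ℝ | ∀ δ > 0, 0 < volume (H ∩ Metric.ball x δ)} ≠ avg H := by
  refine ⟨Hset, ?_, Hset_open.measurableSet, ?_, ?_, ?_, ?_, ?_⟩
  · exact (Metric.isBounded_Ioo 0 1).subset Hset_sub
  · -- 0 < volume Hset
    calc (0:ENNReal) < volume (Set.Ioo 0 (1/4 : ℝ)) := by
          rw [Real.volume_Ioo]; norm_num
      _ ≤ volume Hset := measure_mono Set.subset_union_left
  · rw [accum_eq]; exact Metric.isBounded_Icc 0 1
  · rw [accum_eq]; exact measurableSet_Icc
  · rw [accum_eq]; rw [Real.volume_Icc]; norm_num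
  · rw [accum_eq]
    -- avg (Icc 0 1) = 1/2
    have havg1 : avg (Set.Icc (0:ℝ) 1) = 1 / 2 := by
      unfold avg
      rw [Real.volume_Icc, integral_Icc_eq_integral_Ioc,
        ← intervalIntegral.integral_of_le (by norm_num : (0:ℝ) ≤ 1)]
      rw [integral_id]
      norm_num
    -- facts about Hset
    have hIntIcc : IntegrableOn (fun x : ℝ => x) (Set.Icc 0 1) volume :=
      continuous_id.continuousOn.integrableOn_compact isCompact_Icc
    have hsubIcc : Hset ⊆ Set.Icc 0 1 := fun x hx => ⟨(Hset_sub hx).1.le, (Hset_sub hx).2.le⟩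
    have hHfin : volume Hset < ⊤ :=
      lt_of_le_of_lt (measure_mono Hset_sub) (by rw [Real.volume_Ioo]; exact ENNReal.ofReal_lt_top)
    -- lower bound on measure
    have hm : (1/4 : ℝ) ≤ (volume Hset).toReal := by
      have hle : ENNReal.ofReal (1/4) ≤ volume Hset := by
        calc ENNReal.ofReal (1/4) = volume (Set.Ioo 0 (1/4 : ℝ)) := by
              rw [Real.volume_Ioo]; norm_num
          _ ≤ volume Hset := measure_mono Set.subset_union_left
      calc (1/4 : ℝ) = (ENNReal.ofReal (1/4)).toReal := by
            rw [ENNReal.toReal_ofReal]; norm_num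
        _ ≤ (volume Hset).toReal := ENNReal.toReal_mono hHfin.ne hle
    -- integral split
    set T' : Set ℝ := Tset \ Set.Ioo 0 (1/4) with hT'
    have hHeq : Hset = Set.Ioo 0 (1/4) ∪ T' := by
      rw [hT', Set.union_diff_self, Hset]
    have hT'meas : MeasurableSet T' := (Tset_open.measurableSet).diff measurableSet_Ioo
    have hT'sub : T' ⊆ Set.Ioo 0 1 := fun x hx => Tset_sub hx.1
    have hT'vol : (volume T').toReal ≤ 1/50 := by
      have : volume T' ≤ ENNReal.ofReal (1/50) :=
        le_trans (measure_mono Set.diff_subset) Tset_vol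
      exact ENNReal.toReal_le_of_le_ofReal (by norm_num) this
    have hT'fin : volume T' < ⊤ :=
      lt_of_le_of_lt (le_trans (measure_mono Set.diff_subset) Tset_vol) ENNReal.ofReal_lt_top
    have hIntT' : IntegrableOn (fun x : ℝ => x) T' volume :=
      hIntIcc.mono_set (fun x hx => ⟨(hT'sub hx).1.le, (hT'sub hx).2.le⟩)
    have hIntIoo : IntegrableOn (fun x : ℝ => x) (Set.Ioo 0 (1/4)) volume :=
      hIntIcc.mono_set (fun x hx => ⟨hx.1.le, by linarith [hx.2]⟩)
    have hsplit : ∫ x in Hset, x = (∫ x in Set.Ioo (0:ℝ) (1/4), x) + ∫ x in T', x := by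
      rw [hHeq]
      exact setIntegral_union (Set.disjoint_sdiff_right) hT'meas hIntIoo hIntT'
    have hI1 : ∫ x in Set.Ioo (0:ℝ) (1/4), x = 1/32 := by
      rw [← integral_Ioc_eq_integral_Ioo,
        ← intervalIntegral.integral_of_le (by norm_num : (0:ℝ) ≤ 1/4), integral_id]
      norm_num
    have hI2 : ∫ x in T', x ≤ 1/50 := by
      have hb : ‖∫ x in T', x‖ ≤ 1 * (volume T').toReal := by
        apply norm_setIntegral_le_of_norm_le_const hT'fin
        · intro x hx
          rw [Real.norm_eq_abs, abs_of_pos (hT'sub hx).1]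
          exact (hT'sub hx).2.le
      calc ∫ x in T', x ≤ ‖∫ x in T', x‖ := le_abs_self _
        _ ≤ 1 * (volume T').toReal := hb
        _ = (volume T').toReal := one_mul _
        _ ≤ 1/50 := hT'vol
    have hIle : ∫ x in Hset, x ≤ 1/32 + 1/50 := by
      rw [hsplit, hI1]; linarith
    have hInonneg : 0 ≤ ∫ x in Hset, x :=
      setIntegral_nonneg Hset_open.measurableSet (fun x hx => (Hset_sub hx).1.le)
    have havgH : avg Hset < 1/2 := by
      unfold avg
      calc (∫ x in Hset, x) / (volume Hset).toReal
          ≤ (∫ x in Hset, x) / (1/4) := by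
            apply div_le_div_of_nonneg_left hInonneg (by norm_num) hm
        _ = 4 * ∫ x in Hset, x := by ring
        _ ≤ 4 * (1/32 + 1/50) := by linarith
        _ < 1/2 := by norm_num
    rw [havg1]
    intro h
    rw [← h] at havgH
    norm_num at havgH
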